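/- The number of local unitary equivalence classes of 2-unitary matrices of order 16 on ℂ⁴ ⊗ ℂ⁴ is infinite: there exists a one-parameter family {U(θ) : θ ∈ (−π,π]} of 2-unitary matrices such that θ ↦ Tr L²[U(θ)] is a non-constant continuous function, and Tr L² is a local unitary invariant; hence uncountably many of the U(θ) are pairwise not LU-equivalent. -/

import Mathlib

open Matrix Kronecker

noncomputable def realign {d : ℕ} (U : Matrix (Fin d × Fin d) (Fin d × Fin d) ℂ) :
    Matrix (Fin d × Fin d) (Fin d × Fin d) ℂ :=
  Matrix.of fun x y => U (x.1, y.1) (x.2, y.2)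

noncomputable def ptrans {d : ℕ} (U : Matrix (Fin d × Fin d) (Fin d × Fin d) ℂ) :
    Matrix (Fin d × Fin d) (Fin d × Fin d) ℂ :=
  Matrix.of fun x y => U (x.1, y.2) (y.1, x.2)

def IsUnitary {n : Type*} [Fintype n] [DecidableEq n] (A : Matrix n n ℂ) : Prop :=
  A ∈ Matrix.unitaryGroup n ℂ

def Is2Unitary {d : ℕ} (U : Matrix (Fin d × Fin d) (Fin d × Fin d) ℂ) : Prop :=
  IsUnitary U ∧ IsUnitary (realign U) ∧ IsUnitary (ptrans U)

/-- The swap of tensor factors B and D in the ordering A⊗B⊗C⊗D, as a matrix. -/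
noncomputable def swapBD (d : ℕ) :
    Matrix ((Fin d × Fin d) × (Fin d × Fin d)) ((Fin d × Fin d) × (Fin d × Fin d)) ℂ :=
  Matrix.of fun x y =>
    if x.1.1 = y.1.1 ∧ x.2.1 = y.2.1 ∧ x.1.2 = y.2.2 ∧ x.2.2 = y.1.2 then 1 else 0

/-- `L[U] = (S_BD ⊗ I_AC)(U† ⊗ U†)(S_BD ⊗ I_AC)(U ⊗ U)`. -/
noncomputable def LOp {d : ℕ} (U : Matrix (Fin d × Fin d) (Fin d × Fin d) ℂ) :
    Matrix ((Fin d × Fin d) × (Fin d × Fin d)) ((Fin d × Fin d) × (Fin d × Fin d)) ℂ :=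
  swapBD d * (Uᴴ ⊗ₖ Uᴴ) * swapBD d * (U ⊗ₖ U)

/-- Local unitary equivalence of bipartite matrices. -/
def LUEquiv {d : ℕ} (A B : Matrix (Fin d × Fin d) (Fin d × Fin d) ℂ) : Prop :=
  ∃ u₁ u₂ v₁ v₂ : Matrix (Fin d) (Fin d) ℂ,
    IsUnitary u₁ ∧ IsUnitary u₂ ∧ IsUnitary v₁ ∧ IsUnitary v₂ ∧
    B = (u₁ ⊗ₖ u₂) * A * (v₁ ⊗ₖ v₂)

/-! ### Monomial (generalized permutation) matrices -/

abbrev Q4 := Fin 4 × Fin 4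

def mono {n : Type*} [DecidableEq n] (e : n ≃ n) (φ : n → ℂ) : Matrix n n ℂ :=
  Matrix.of fun i j => if j = e i then φ i else 0

lemma mono_mul {n : Type*} [DecidableEq n] [Fintype n] (e f : n ≃ n) (φ ψ : n → ℂ) :
    mono e φ * mono f ψ = mono (e.trans f) (fun i => φ i * ψ (e i)) := by
  ext i k
  simp only [mono, Matrix.mul_apply, Matrix.of_apply, ite_mul, mul_ite, zero_mul, mul_zero]
  rw [Finset.sum_eq_single (e i)]
  · simp
    congr
  · intro b _ hb
    simp [hb]
  · simp

lemma mono_conjTranspose {n : Type*} [DecidableEq n] (e : n ≃ n) (φ : n → ℂ) :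
    (mono e φ)ᴴ = mono e.symm (fun i => star (φ (e.symm i))) := by
  ext i j
  simp only [conjTranspose_apply, mono, Matrix.of_apply]
  by_cases h : i = e j
  · rw [if_pos h, if_pos (by rw [h, Equiv.symm_apply_apply]), h, Equiv.symm_apply_apply]
  · rw [if_neg h, if_neg (fun hc => h (by rw [hc, Equiv.apply_symm_apply])), star_zero]

lemma mono_kron {n m : Type*} [DecidableEq n] [DecidableEq m]
    (e : n ≃ n) (f : m ≃ m) (φ : n → ℂ) (ψ : m → ℂ) :
    (mono e φ) ⊗ₖ (mono f ψ) = mono (e.prodCongr f) (fun p => φ p.1 * ψ p.2) := by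
  ext ⟨i, j⟩ ⟨k, l⟩
  simp only [kroneckerMap_apply, mono, Matrix.of_apply, Equiv.prodCongr_apply, Prod.map,
    Prod.mk.injEq]
  by_cases hk : k = e i <;> by_cases hl : l = f j <;> simp [hk, hl]

lemma trace_mono {n : Type*} [DecidableEq n] [Fintype n] (e : n ≃ n) (φ : n → ℂ) :
    (mono e φ).trace = ∑ i, if e i = i then φ i else 0 := by
  simp [Matrix.trace, Matrix.diag, mono, eq_comm]

lemma mono_unitary {n : Type*} [DecidableEq n] [Fintype n] (e : n ≃ n) (φ : n → ℂ)
    (h : ∀ i, φ i * star (φ i) = 1) : IsUnitary (mono e φ) := by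
  rw [IsUnitary, Matrix.mem_unitaryGroup_iff, Matrix.star_eq_conjTranspose,
    mono_conjTranspose, mono_mul]
  ext i j
  simp only [mono, Matrix.of_apply, Equiv.trans_apply, Equiv.symm_apply_apply, Matrix.one_apply]
  by_cases hij : j = i
  · rw [if_pos hij, if_pos hij.symm]
    exact h i
  · rw [if_neg hij, if_neg (fun hc => hij hc.symm)]

lemma mono_one_mul {n : Type*} [DecidableEq n] [Fintype n] (e : n ≃ n) (M : Matrix n n ℂ) :
    mono e (fun _ => 1) * M = Matrix.of fun x y => M (e x) y := by
  ext x y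
  simp only [mono, Matrix.mul_apply, Matrix.of_apply, ite_mul, one_mul, zero_mul]
  rw [Finset.sum_eq_single (e x)]
  · simp
  · intro b _ hb
    simp [hb]
  · simp

lemma mul_mono_one {n : Type*} [DecidableEq n] [Fintype n] (e : n ≃ n) (M : Matrix n n ℂ) :
    M * mono e (fun _ => 1) = Matrix.of fun x y => M x (e.symm y) := by
  ext x y
  simp only [mono, Matrix.mul_apply, Matrix.of_apply, mul_ite, mul_one, mul_zero]
  rw [Finset.sum_eq_single (e.symm y)]
  · simp
  · intro b _ hb
    rw [if_neg (fun hc => hb (by rw [hc, Equiv.symm_apply_apply]))]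
  · simp

/-! ### The concrete 2-unitary permutation from orthogonal Latin squares of order 4 -/

def xor4 : Fin 4 → Fin 4 → Fin 4 :=
  fun a b => ⟨(a.val ^^^ b.val) % 4, Nat.mod_lt _ (by norm_num)⟩
def mul4 : Fin 4 → Fin 4 :=
  fun a => ⟨(if a.val = 0 then 0 else a.val % 3 + 1) % 4, Nat.mod_lt _ (by norm_num)⟩
def winv4 : Fin 4 → Fin 4 := mul4
def minv4 : Fin 4 → Fin 4 :=
  fun a => ⟨(if a.val = 0 then 0 else (a.val + 1) % 3 + 1) % 4, Nat.mod_lt _ (by norm_num)⟩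

def e4 : Q4 ≃ Q4 where
  toFun x := (xor4 x.1 x.2, xor4 x.1 (mul4 x.2))
  invFun y := (xor4 y.1 (winv4 (xor4 y.1 y.2)), winv4 (xor4 y.1 y.2))
  left_inv := by decide
  right_inv := by decide

def tE : Q4 ≃ Q4 where
  toFun x := (xor4 x.1 x.2, xor4 x.1 (mul4 (xor4 x.1 x.2)))
  invFun y := (xor4 y.2 (mul4 y.1), xor4 (xor4 y.2 (mul4 y.1)) y.1)
  left_inv := by decide
  right_inv := by decide

def rE : Q4 ≃ Q4 where
  toFun x := (xor4 x.1 (minv4 (xor4 x.1 x.2)), minv4 (xor4 x.1 x.2))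
  invFun y := (xor4 y.1 y.2, xor4 (xor4 y.1 y.2) (mul4 y.2))
  left_inv := by decide
  right_inv := by decide

def sE (d : ℕ) : ((Fin d × Fin d) × (Fin d × Fin d)) ≃ ((Fin d × Fin d) × (Fin d × Fin d)) where
  toFun x := ((x.1.1, x.2.2), (x.2.1, x.1.2))
  invFun x := ((x.1.1, x.2.2), (x.2.1, x.1.2))
  left_inv := fun _ => rfl
  right_inv := fun _ => rfl

lemma sE_symm (d : ℕ) : (sE d).symm = sE d := rfl

lemma swapBD_eq (d : ℕ) : swapBD d = mono (sE d) (fun _ => 1) := by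
  ext ⟨⟨a, b⟩, ⟨c, e⟩⟩ ⟨⟨a', b'⟩, ⟨c', d'⟩⟩
  simp only [swapBD, mono, sE, Matrix.of_apply, Equiv.coe_fn_mk, Prod.mk.injEq]
  by_cases h : a = a' ∧ c = c' ∧ b = d' ∧ e = b'
  · obtain ⟨h1, h2, h3, h4⟩ := h
    rw [if_pos ⟨h1, h2, h3, h4⟩, if_pos ⟨⟨h1.symm, h4.symm⟩, h2.symm, h3.symm⟩]
  · rw [if_neg h, if_neg (fun hc => h ⟨hc.1.1.symm, hc.2.1.symm, hc.2.2.symm, hc.1.2.symm⟩)]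

lemma realign_mono (e t : Q4 ≃ Q4)
    (H : ∀ a b c d : Fin 4, ((b, d) = e (a, c)) ↔ ((c, d) = t (a, b))) (φ : Q4 → ℂ) :
    realign (mono e φ) = mono t (fun x => φ (x.1, (t x).1)) := by
  ext ⟨x1, x2⟩ ⟨y1, y2⟩
  simp only [realign, mono, Matrix.of_apply]
  by_cases h : (y1, y2) = t (x1, x2)
  · have h1 : y1 = (t (x1, x2)).1 := by rw [← h]
    rw [if_pos ((H x1 x2 y1 y2).mpr h), if_pos h, ← h1]
  · rw [if_neg (fun hc => h ((H x1 x2 y1 y2).mp hc)), if_neg h]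

lemma ptrans_mono (e r : Q4 ≃ Q4)
    (H : ∀ a b c d : Fin 4, ((c, b) = e (a, d)) ↔ ((c, d) = r (a, b))) (φ : Q4 → ℂ) :
    ptrans (mono e φ) = mono r (fun x => φ (x.1, (r x).2)) := by
  ext ⟨x1, x2⟩ ⟨y1, y2⟩
  simp only [ptrans, mono, Matrix.of_apply]
  by_cases h : (y1, y2) = r (x1, x2)
  · have h2 : y2 = (r (x1, x2)).2 := by rw [← h]
    rw [if_pos ((H x1 x2 y1 y2).mpr h), if_pos h, ← h2]
  · rw [if_neg (fun hc => h ((H x1 x2 y1 y2).mp hc)), if_neg h]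

lemma H_t : ∀ a b c d : Fin 4, ((b, d) = e4 (a, c)) ↔ ((c, d) = tE (a, b)) := by decide
lemma H_r : ∀ a b c d : Fin 4, ((c, b) = e4 (a, d)) ↔ ((c, d) = rE (a, b)) := by decide

/-! ### The enphased family -/

noncomputable def ph (θ : ℝ) : Q4 → ℂ :=
  fun x => if x = ((0 : Fin 4), (0 : Fin 4)) then Complex.exp (θ * Complex.I) else 1

noncomputable def Ufam (θ : ℝ) : Matrix Q4 Q4 ℂ := mono e4 (ph θ)

lemma ph_unit (θ : ℝ) (x : Q4) : ph θ x * star (ph θ x) = 1 := by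
  unfold ph
  split_ifs with h
  · have hs : star (Complex.exp (θ * Complex.I)) = Complex.exp (-(θ * Complex.I)) := by
      rw [Complex.star_def, ← Complex.exp_conj]
      congr 1
      simp [Complex.ext_iff]
    rw [hs, ← Complex.exp_add, add_neg_cancel, Complex.exp_zero]
  · simp

lemma Ufam_2unitary (θ : ℝ) : Is2Unitary (Ufam θ) := by
  refine ⟨mono_unitary _ _ (ph_unit θ), ?_, ?_⟩
  · rw [Ufam, realign_mono e4 tE H_t]
    exact mono_unitary _ _ (fun x => ph_unit θ _)
  · rw [Ufam, ptrans_mono e4 rE H_r]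
    exact mono_unitary _ _ (fun x => ph_unit θ _)

/-! ### The operator L and its trace for the family -/

def PiE : (Q4 × Q4) ≃ (Q4 × Q4) :=
  (((sE 4).trans (Equiv.prodCongr e4.symm e4.symm)).trans (sE 4)).trans (Equiv.prodCongr e4 e4)

noncomputable def Cf (θ : ℝ) : Q4 × Q4 → ℂ := fun x =>
  star (ph θ (e4.symm ((sE 4) x).1)) * star (ph θ (e4.symm ((sE 4) x).2)) *
    (ph θ (((sE 4) ((Equiv.prodCongr e4.symm e4.symm) ((sE 4) x))).1) *
     ph θ (((sE 4) ((Equiv.prodCongr e4.symm e4.symm) ((sE 4) x))).2))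

lemma LOp_Ufam (θ : ℝ) : LOp (Ufam θ) = mono PiE (Cf θ) := by
  rw [LOp, Ufam, swapBD_eq, mono_conjTranspose, mono_kron, mono_kron,
    mono_mul, mono_mul, mono_mul]
  refine congrArg (mono PiE) ?_
  funext i
  simp only [Cf, Equiv.trans_apply]
  ring

-- plain-function versions for fast kernel computation
def e4i : Q4 → Q4 := fun y => (xor4 y.1 (winv4 (xor4 y.1 y.2)), winv4 (xor4 y.1 y.2))
def e4f : Q4 → Q4 := fun x => (xor4 x.1 x.2, xor4 x.1 (mul4 x.2))
def sf : (Q4 × Q4) → (Q4 × Q4) := fun x => ((x.1.1, x.2.2), (x.2.1, x.1.2))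
def piE : (Q4 × Q4) → (Q4 × Q4) := fun x =>
  (fun p => (e4f p.1, e4f p.2)) (sf ((fun p => (e4i p.1, e4i p.2)) (sf x)))

lemma PiE_eq : ∀ x, PiE x = piE x := fun _ => rfl

set_option maxRecDepth 100000 in
lemma piE_invol : ∀ x, piE (piE x) = x := by decide

lemma PiE_invol : ∀ x, PiE (PiE x) = x := by
  intro x
  rw [PiE_eq, PiE_eq]
  exact piE_invol x

lemma trace_fm (θ : ℝ) :
    ((LOp (Ufam θ)) ^ 2).trace = ∑ x : Q4 × Q4, Cf θ x * Cf θ (PiE x) := by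
  rw [pow_two, LOp_Ufam, mono_mul, trace_mono]
  refine Finset.sum_congr rfl (fun x _ => ?_)
  rw [if_pos]
  show PiE (PiE x) = x
  exact PiE_invol x

/-! ### Values at θ = 0 and θ = π -/

lemma ph_zero : ph 0 = fun _ => 1 := by
  funext x
  simp [ph]

lemma traceAt_zero : ((LOp (Ufam 0)) ^ 2).trace = 256 := by
  rw [trace_fm]
  have : ∀ x : Q4 × Q4, Cf 0 x * Cf 0 (PiE x) = 1 := by
    intro x
    simp [Cf, ph_zero]
  rw [Finset.sum_congr rfl (fun x _ => this x), Finset.sum_const]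
  norm_num

def phz : Q4 → ℤ := fun x => if x = ((0 : Fin 4), (0 : Fin 4)) then -1 else 1

def Cz : Q4 × Q4 → ℤ := fun x =>
  phz (e4.symm ((sE 4) x).1) * phz (e4.symm ((sE 4) x).2) *
    (phz (((sE 4) ((Equiv.prodCongr e4.symm e4.symm) ((sE 4) x))).1) *
     phz (((sE 4) ((Equiv.prodCongr e4.symm e4.symm) ((sE 4) x))).2))

def Czp : Q4 × Q4 → ℤ := fun x =>
  phz (e4i ((sf x)).1) * phz (e4i ((sf x)).2) *
    (phz ((sf ((fun p => (e4i p.1, e4i p.2)) (sf x))).1) *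
     phz ((sf ((fun p => (e4i p.1, e4i p.2)) (sf x))).2))

lemma Cz_eq : ∀ x, Cz x = Czp x := fun _ => rfl

set_option maxRecDepth 100000 in
lemma sum_Czp : (∑ x : Q4 × Q4, Czp x * Czp (piE x)) = 208 := by decide

lemma ph_pi : ph Real.pi = fun x => ((phz x : ℤ) : ℂ) := by
  funext x
  by_cases h : x = ((0 : Fin 4), (0 : Fin 4))
  · simp [ph, phz, h, Complex.exp_pi_mul_I]
  · simp [ph, phz, h]

lemma Cf_pi (x : Q4 × Q4) : Cf Real.pi x = ((Cz x : ℤ) : ℂ) := by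
  simp only [Cf, Cz, ph_pi, star_intCast]
  push_cast
  ring

lemma traceAt_pi : ((LOp (Ufam Real.pi)) ^ 2).trace = 208 := by
  rw [trace_fm]
  have : ∀ x : Q4 × Q4, Cf Real.pi x * Cf Real.pi (PiE x) =
      (((Cz x * Cz (PiE x) : ℤ)) : ℂ) := by
    intro x
    rw [Cf_pi, Cf_pi]
    push_cast
    ring
  rw [Finset.sum_congr rfl (fun x _ => this x), ← Int.cast_sum]
  have : (∑ x : Q4 × Q4, Cz x * Cz (PiE x)) = 208 := by
    calc (∑ x : Q4 × Q4, Cz x * Cz (PiE x))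
        = ∑ x : Q4 × Q4, Czp x * Czp (piE x) := by
          refine Finset.sum_congr rfl (fun x _ => ?_)
          rw [Cz_eq, Cz_eq, PiE_eq]
      _ = 208 := sum_Czp
  rw [this]
  norm_num

/-! ### Continuity -/

lemma cont_ph (y : Q4) : Continuous fun θ : ℝ => ph θ y := by
  unfold ph
  by_cases h : y = ((0 : Fin 4), (0 : Fin 4))
  · simp only [if_pos h]
    exact Complex.continuous_exp.comp (Complex.continuous_ofReal.mul continuous_const)
  · simp only [if_neg h]
    exact continuous_const

lemma cont_Cf (x : Q4 × Q4) : Continuous fun θ : ℝ => Cf θ x := by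
  unfold Cf
  exact (((cont_ph _).star.mul (cont_ph _).star).mul ((cont_ph _).mul (cont_ph _)))

lemma cont_trace : Continuous fun θ : ℝ => ((LOp (Ufam θ)) ^ 2).trace := by
  have h : (fun θ : ℝ => ((LOp (Ufam θ)) ^ 2).trace)
      = fun θ => ∑ x : Q4 × Q4, Cf θ x * Cf θ (PiE x) := funext trace_fm
  rw [h]
  exact continuous_finset_sum _ (fun x _ => (cont_Cf x).mul (cont_Cf (PiE x)))

/-! ### LU invariance of Tr L² -/

lemma kron_conjT {n m : Type*} [DecidableEq n] [DecidableEq m]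
    (A : Matrix n n ℂ) (B : Matrix m m ℂ) : (A ⊗ₖ B)ᴴ = Aᴴ ⊗ₖ Bᴴ := by
  ext ⟨i, j⟩ ⟨k, l⟩
  simp only [conjTranspose_apply, kroneckerMap_apply, star_mul']

lemma swap_comm {d : ℕ} (u₁ u₂ : Matrix (Fin d) (Fin d) ℂ) :
    swapBD d * ((u₁ ⊗ₖ u₂) ⊗ₖ (u₁ ⊗ₖ u₂)) = ((u₁ ⊗ₖ u₂) ⊗ₖ (u₁ ⊗ₖ u₂)) * swapBD d := by
  rw [swapBD_eq, mono_one_mul, mul_mono_one]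
  ext ⟨⟨a, b⟩, ⟨c, dd⟩⟩ ⟨⟨a', b'⟩, ⟨c', d'⟩⟩
  simp only [Matrix.of_apply, sE_symm]
  simp only [kroneckerMap_apply, sE, Equiv.coe_fn_mk]
  ring

lemma LOp_conj {d : ℕ} (A : Matrix (Fin d × Fin d) (Fin d × Fin d) ℂ)
    (u₁ u₂ v₁ v₂ : Matrix (Fin d) (Fin d) ℂ)
    (hu₁ : IsUnitary u₁) (hu₂ : IsUnitary u₂) :
    LOp ((u₁ ⊗ₖ u₂) * A * (v₁ ⊗ₖ v₂)) =
      ((v₁ ⊗ₖ v₂) ⊗ₖ (v₁ ⊗ₖ v₂))ᴴ * LOp A * ((v₁ ⊗ₖ v₂) ⊗ₖ (v₁ ⊗ₖ v₂)) := by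
  have hu₁' : u₁ᴴ * u₁ = 1 := by
    rw [← Matrix.star_eq_conjTranspose]
    exact (Matrix.mem_unitaryGroup_iff'.mp hu₁)
  have hu₂' : u₂ᴴ * u₂ = 1 := by
    rw [← Matrix.star_eq_conjTranspose]
    exact (Matrix.mem_unitaryGroup_iff'.mp hu₂)
  have hBH : ((u₁ ⊗ₖ u₂) * A * (v₁ ⊗ₖ v₂))ᴴ = (v₁ ⊗ₖ v₂)ᴴ * Aᴴ * (u₁ ⊗ₖ u₂)ᴴ := by
    rw [conjTranspose_mul, conjTranspose_mul, mul_assoc]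
  have hvH : (v₁ ⊗ₖ v₂)ᴴ = v₁ᴴ ⊗ₖ v₂ᴴ := kron_conjT v₁ v₂
  have huH : (u₁ ⊗ₖ u₂)ᴴ = u₁ᴴ ⊗ₖ u₂ᴴ := kron_conjT u₁ u₂
  have key1 : swapBD d * ((v₁ ⊗ₖ v₂)ᴴ ⊗ₖ (v₁ ⊗ₖ v₂)ᴴ) =
      ((v₁ ⊗ₖ v₂)ᴴ ⊗ₖ (v₁ ⊗ₖ v₂)ᴴ) * swapBD d := by
    rw [hvH]; exact swap_comm v₁ᴴ v₂ᴴ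
  have key2 : swapBD d * ((u₁ ⊗ₖ u₂) ⊗ₖ (u₁ ⊗ₖ u₂)) =
      ((u₁ ⊗ₖ u₂) ⊗ₖ (u₁ ⊗ₖ u₂)) * swapBD d := swap_comm u₁ u₂
  have huu : ((u₁ ⊗ₖ u₂)ᴴ ⊗ₖ (u₁ ⊗ₖ u₂)ᴴ) * ((u₁ ⊗ₖ u₂) ⊗ₖ (u₁ ⊗ₖ u₂)) = 1 := by
    rw [← Matrix.mul_kronecker_mul,
      show (u₁ ⊗ₖ u₂)ᴴ * (u₁ ⊗ₖ u₂) = 1 from by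
        rw [huH, ← Matrix.mul_kronecker_mul, hu₁', hu₂', Matrix.one_kronecker_one]]
    exact Matrix.one_kronecker_one
  have key1' : ∀ X, swapBD d * (((v₁ ⊗ₖ v₂)ᴴ ⊗ₖ (v₁ ⊗ₖ v₂)ᴴ) * X) =
      ((v₁ ⊗ₖ v₂)ᴴ ⊗ₖ (v₁ ⊗ₖ v₂)ᴴ) * (swapBD d * X) := fun X => by
    rw [← mul_assoc, key1, mul_assoc]
  have key2' : ∀ X, swapBD d * (((u₁ ⊗ₖ u₂) ⊗ₖ (u₁ ⊗ₖ u₂)) * X) =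
      ((u₁ ⊗ₖ u₂) ⊗ₖ (u₁ ⊗ₖ u₂)) * (swapBD d * X) := fun X => by
    rw [← mul_assoc, key2, mul_assoc]
  have huu' : ∀ X, ((u₁ ⊗ₖ u₂)ᴴ ⊗ₖ (u₁ ⊗ₖ u₂)ᴴ) * (((u₁ ⊗ₖ u₂) ⊗ₖ (u₁ ⊗ₖ u₂)) * X) = X :=
    fun X => by rw [← mul_assoc, huu, one_mul]
  simp only [LOp, hBH]
  rw [show ((v₁ ⊗ₖ v₂)ᴴ * Aᴴ * (u₁ ⊗ₖ u₂)ᴴ) ⊗ₖ ((v₁ ⊗ₖ v₂)ᴴ * Aᴴ * (u₁ ⊗ₖ u₂)ᴴ)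
      = ((v₁ ⊗ₖ v₂)ᴴ ⊗ₖ (v₁ ⊗ₖ v₂)ᴴ) * (Aᴴ ⊗ₖ Aᴴ) * ((u₁ ⊗ₖ u₂)ᴴ ⊗ₖ (u₁ ⊗ₖ u₂)ᴴ) from by
    rw [Matrix.mul_kronecker_mul, Matrix.mul_kronecker_mul]]
  rw [show ((u₁ ⊗ₖ u₂) * A * (v₁ ⊗ₖ v₂)) ⊗ₖ ((u₁ ⊗ₖ u₂) * A * (v₁ ⊗ₖ v₂))
      = ((u₁ ⊗ₖ u₂) ⊗ₖ (u₁ ⊗ₖ u₂)) * (A ⊗ₖ A) * ((v₁ ⊗ₖ v₂) ⊗ₖ (v₁ ⊗ₖ v₂)) from by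
    rw [Matrix.mul_kronecker_mul, Matrix.mul_kronecker_mul]]
  rw [show ((v₁ ⊗ₖ v₂) ⊗ₖ (v₁ ⊗ₖ v₂))ᴴ = (v₁ ⊗ₖ v₂)ᴴ ⊗ₖ (v₁ ⊗ₖ v₂)ᴴ from kron_conjT _ _]
  simp only [mul_assoc]
  rw [key2', huu', key1']

lemma trace_LU_invariant {d : ℕ} (A B : Matrix (Fin d × Fin d) (Fin d × Fin d) ℂ)
    (h : LUEquiv A B) : ((LOp A) ^ 2).trace = ((LOp B) ^ 2).trace := by
  obtain ⟨u₁, u₂, v₁, v₂, hu₁, hu₂, hv₁, hv₂, rfl⟩ := h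
  have h1 : v₁ * v₁ᴴ = 1 := by
    rw [← Matrix.star_eq_conjTranspose]
    exact Matrix.mem_unitaryGroup_iff.mp hv₁
  have h2 : v₂ * v₂ᴴ = 1 := by
    rw [← Matrix.star_eq_conjTranspose]
    exact Matrix.mem_unitaryGroup_iff.mp hv₂
  have hWW : ((v₁ ⊗ₖ v₂) ⊗ₖ (v₁ ⊗ₖ v₂)) * ((v₁ ⊗ₖ v₂) ⊗ₖ (v₁ ⊗ₖ v₂))ᴴ = 1 := by
    rw [show ((v₁ ⊗ₖ v₂) ⊗ₖ (v₁ ⊗ₖ v₂))ᴴ = (v₁ᴴ ⊗ₖ v₂ᴴ) ⊗ₖ (v₁ᴴ ⊗ₖ v₂ᴴ) from by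
      rw [kron_conjT, kron_conjT]]
    simp only [← Matrix.mul_kronecker_mul, h1, h2, Matrix.one_kronecker_one]
  have key : (((v₁ ⊗ₖ v₂) ⊗ₖ (v₁ ⊗ₖ v₂))ᴴ * LOp A * ((v₁ ⊗ₖ v₂) ⊗ₖ (v₁ ⊗ₖ v₂))) *
      (((v₁ ⊗ₖ v₂) ⊗ₖ (v₁ ⊗ₖ v₂))ᴴ * LOp A * ((v₁ ⊗ₖ v₂) ⊗ₖ (v₁ ⊗ₖ v₂))) =
      ((v₁ ⊗ₖ v₂) ⊗ₖ (v₁ ⊗ₖ v₂))ᴴ * ((LOp A * LOp A) * ((v₁ ⊗ₖ v₂) ⊗ₖ (v₁ ⊗ₖ v₂))) := by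
    have e1 : (((v₁ ⊗ₖ v₂) ⊗ₖ (v₁ ⊗ₖ v₂))ᴴ * LOp A * ((v₁ ⊗ₖ v₂) ⊗ₖ (v₁ ⊗ₖ v₂))) *
        (((v₁ ⊗ₖ v₂) ⊗ₖ (v₁ ⊗ₖ v₂))ᴴ * LOp A * ((v₁ ⊗ₖ v₂) ⊗ₖ (v₁ ⊗ₖ v₂))) =
        ((v₁ ⊗ₖ v₂) ⊗ₖ (v₁ ⊗ₖ v₂))ᴴ * (LOp A *
          ((((v₁ ⊗ₖ v₂) ⊗ₖ (v₁ ⊗ₖ v₂)) * ((v₁ ⊗ₖ v₂) ⊗ₖ (v₁ ⊗ₖ v₂))ᴴ) *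
            (LOp A * ((v₁ ⊗ₖ v₂) ⊗ₖ (v₁ ⊗ₖ v₂))))) := by
      simp only [mul_assoc]
    rw [e1, hWW, one_mul]
    simp only [mul_assoc]
  rw [LOp_conj A u₁ u₂ v₁ v₂ hu₁ hu₂, pow_two, pow_two, key]
  conv_rhs => rw [Matrix.trace_mul_comm]
  simp only [mul_assoc, hWW, mul_one]

/-- There are infinitely many LU-equivalence classes of 2-unitary matrices of order 16:
a one-parameter family of 2-unitaries on which the LU-invariant `Tr L²` is a
non-constant continuous function, so that uncountably many members are pairwise
LU-inequivalent. -/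
theorem infinitely_many_LU_classes_d4 :
    ∃ U : ℝ → Matrix (Fin 4 × Fin 4) (Fin 4 × Fin 4) ℂ,
      (∀ θ ∈ Set.Ioc (-Real.pi) Real.pi, Is2Unitary (U θ)) ∧
      ContinuousOn (fun θ => ((LOp (U θ)) ^ 2).trace) (Set.Ioc (-Real.pi) Real.pi) ∧
      (∃ θ₁ ∈ Set.Ioc (-Real.pi) Real.pi, ∃ θ₂ ∈ Set.Ioc (-Real.pi) Real.pi,
        ((LOp (U θ₁)) ^ 2).trace ≠ ((LOp (U θ₂)) ^ 2).trace) ∧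
      (∀ A B : Matrix (Fin 4 × Fin 4) (Fin 4 × Fin 4) ℂ,
        LUEquiv A B → ((LOp A) ^ 2).trace = ((LOp B) ^ 2).trace) ∧
      ∃ S : Set ℝ, S ⊆ Set.Ioc (-Real.pi) Real.pi ∧ ¬ S.Countable ∧
        ∀ θ₁ ∈ S, ∀ θ₂ ∈ S, θ₁ ≠ θ₂ → ¬ LUEquiv (U θ₁) (U θ₂) := by
  refine ⟨Ufam, fun θ _ => Ufam_2unitary θ, cont_trace.continuousOn, ?_,
    trace_LU_invariant, ?_⟩
  · exact ⟨Real.pi, ⟨by linarith [Real.pi_pos], le_refl _⟩,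
      0, ⟨by linarith [Real.pi_pos], Real.pi_pos.le⟩,
      by rw [traceAt_pi, traceAt_zero]; norm_num⟩
  · set g : ℝ → ℝ := fun θ => (((LOp (Ufam θ)) ^ 2).trace).re with hg
    have hgc : Continuous g := Complex.continuous_re.comp cont_trace
    have hg0 : g 0 = 256 := by rw [hg]; simp only [traceAt_zero]; norm_num
    have hgpi : g Real.pi = 208 := by rw [hg]; simp only [traceAt_pi]; norm_num
    have hIVT : Set.Icc (208 : ℝ) 256 ⊆ g '' Set.Icc 0 Real.pi := by
      have h := intermediate_value_Icc' Real.pi_pos.le hgc.continuousOn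
      rw [hg0, hgpi] at h
      exact h
    choose F hF1 hF2 using fun y : Set.Icc (208 : ℝ) 256 => hIVT y.2
    refine ⟨Set.range F, ?_, ?_, ?_⟩
    · rintro θ ⟨y, rfl⟩
      exact ⟨by linarith [(hF1 y).1, Real.pi_pos], (hF1 y).2⟩
    · intro hc
      have himg : Set.Icc (208 : ℝ) 256 ⊆ g '' Set.range F := by
        rintro y hy
        exact ⟨F ⟨y, hy⟩, ⟨⟨y, hy⟩, rfl⟩, hF2 ⟨y, hy⟩⟩
      have hcnt : (Set.Icc (208 : ℝ) 256).Countable := (hc.image g).mono himg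
      have hcard := Cardinal.mk_Icc_real (show (208 : ℝ) < 256 by norm_num)
      rw [← Cardinal.le_aleph0_iff_set_countable, hcard] at hcnt
      exact absurd hcnt (not_le.mpr Cardinal.aleph0_lt_continuum)
    · rintro θ₁ ⟨y₁, rfl⟩ θ₂ ⟨y₂, rfl⟩ hne hLU
      have htr := trace_LU_invariant _ _ hLU
      have hgeq : g (F y₁) = g (F y₂) := by rw [hg]; simp only; rw [htr]
      rw [hF2 y₁, hF2 y₂] at hgeq
      exact hne (congrArg F (Subtype.ext hgeq))
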